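/- If ‖f‖ > ε, then J attains strictly negative values: there exists v ∈ Y with J(v) < 0. Consequently any global minimizer of J is nonzero. -/

import Mathlib

open RealInnerProductSpace ContinuousLinearMap

/-- If ‖f‖ > ε then J attains strictly negative values, and consequently every
global minimizer of J is nonzero. -/
theorem J_neg_values_of_large_target
    {X Y : Type*} [NormedAddCommGroup X] [InnerProductSpace ℝ X] [CompleteSpace X]
    [NormedAddCommGroup Y] [InnerProductSpace ℝ Y] [CompleteSpace Y]
    (L : X →L[ℝ] Y) (hinj : Function.Injective (adjoint L))
    (f : Y) (ε : ℝ) (hε : 0 < ε)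
    (J : Y → ℝ)
    (hJ : J = fun v => (1/2) * ‖adjoint L v‖^2 + ε * ‖v‖ - ⟪f, v⟫)
    (hf : ε < ‖f‖) :
    (∃ v : Y, J v < 0) ∧ ∀ vt : Y, (∀ v : Y, J vt ≤ J v) → vt ≠ 0 := by
  have hfpos : 0 < ‖f‖ := hε.trans hf
  have hc : 0 < ‖f‖ ^ 2 - ε * ‖f‖ := by nlinarith
  set A := ‖adjoint L f‖ with hA
  have hAden : (0:ℝ) < A ^ 2 + 1 := by positivity
  set t := (‖f‖ ^ 2 - ε * ‖f‖) / (A ^ 2 + 1) with ht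
  have htpos : 0 < t := div_pos hc hAden
  have hneg : J (t • f) < 0 := by
    have h1 : ‖adjoint L (t • f)‖ = t * A := by
      rw [map_smul, norm_smul, Real.norm_eq_abs, abs_of_pos htpos]
    have h2 : ‖t • f‖ = t * ‖f‖ := by
      rw [norm_smul, Real.norm_eq_abs, abs_of_pos htpos]
    have h3 : ⟪f, t • f⟫ = t * ‖f‖ ^ 2 := by
      rw [real_inner_smul_right, real_inner_self_eq_norm_sq]
    rw [hJ]
    simp only [h1, h2, h3]
    have key : t * A ^ 2 < 2 * (‖f‖ ^ 2 - ε * ‖f‖) := by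
      have : t * (A ^ 2 + 1) = ‖f‖ ^ 2 - ε * ‖f‖ := by
        rw [ht, div_mul_cancel₀ _ hAden.ne']
      nlinarith
    nlinarith
  refine ⟨⟨t • f, hneg⟩, fun vt hmin hvt ↦ ?_⟩
  have h0 : J vt = 0 := by
    rw [hvt, hJ]; simp
  have := hmin (t • f)
  linarith
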